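/- For every directed s-t path P in G_φ and every clause index j ∈ {1,…,m}, the total cost of P under c^j equals c^j of the unique bridge edge contained in P; in particular the cost of every s-t path under every scenario c^j is either 0 or 1. -/

import Mathlib

/-- Vertices of the graph `G_φ`: source `s`, sink `t`, and for each variable index
`i ∈ {1,…,n}` the four vertices `tᵢ¹, tᵢ², fᵢ¹, fᵢ²`.  Here `Vtx.mid i second isTrue`
is `tᵢ` if `isTrue = true`, `fᵢ` if `isTrue = false`; superscript `2` iff `second = true`. -/
inductive Vtx (n : ℕ) : Type where
  | s : Vtx n
  | t : Vtx n
  | mid (i : Fin n) (second : Bool) (isTrue : Bool) : Vtx n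
deriving DecidableEq

/-- The directed edges of `G_φ`. -/
def GEdge (n : ℕ) : Vtx n → Vtx n → Prop :=
  fun a b =>
    match a, b with
    | .s, .mid i false _ => (i : ℕ) = 0
    | .mid i false _, .mid j false _ => (j : ℕ) = (i : ℕ) + 1
    | .mid i true _, .mid j true _ => (j : ℕ) = (i : ℕ) + 1
    | .mid i false v, .mid j true w => j = i ∧ w = v
    | .mid i true _, .t => (i : ℕ) = n - 1
    | _, _ => False

/-- Whether `(a, b)` is a bridge edge, i.e. of the form `(tᵢ¹,tᵢ²)` or `(fᵢ¹,fᵢ²)`. -/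
def isBridgeB (n : ℕ) : Vtx n → Vtx n → Bool
  | .mid i false v, .mid j true w => i == j && v == w
  | _, _ => false

/-- The edge costs `c^j` determined by a clause `C` (a set of literals `(i, ε)`):
a bridge edge `(tᵢ¹,tᵢ²)` (resp. `(fᵢ¹,fᵢ²)`) costs `0` if `(i,true) ∈ C`
(resp. `(i,false) ∈ C`) and `1` otherwise; all non-bridge edges cost `0`. -/
def cost (n : ℕ) (C : Finset (Fin n × Bool)) : Vtx n → Vtx n → ℕ
  | .mid i false v, .mid j true w =>
      if j = i ∧ w = v then (if (i, v) ∈ C then 0 else 1) else 0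
  | _, _ => 0

/-- The cost of a path (list of vertices) under the scenario of clause `C`:
the sum of the edge costs over consecutive pairs. -/
def pathCost (n : ℕ) (C : Finset (Fin n × Bool)) (P : List (Vtx n)) : ℕ :=
  ((P.zip P.tail).map fun q => cost n C q.1 q.2).sum

/-- A directed `s`-`t` path in `G_φ`: consecutive pairs are edges, vertices are
pairwise distinct, the first vertex is `s` and the last is `t`. -/
def isSTPath (n : ℕ) (P : List (Vtx n)) : Prop :=
  P.Chain' (GEdge n) ∧ P.Nodup ∧ P.head? = some Vtx.s ∧ P.getLast? = some Vtx.t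

lemma pathCost_cons (n C) (a b : Vtx n) (rest) :
    pathCost n C (a::b::rest) = cost n C a b + pathCost n C (b::rest) := by
  simp [pathCost]

lemma zip_tail_cons (n : ℕ) (a b : Vtx n) (rest) :
    (a::b::rest).zip (a::b::rest).tail = (a,b) :: (b::rest).zip (b::rest).tail := rfl

lemma lemA (n : ℕ) (C : Finset (Fin n × Bool)) :
    ∀ P : List (Vtx n), P.Chain' (GEdge n) →
    (∀ x, P.head? = some x → (∃ i v, x = .mid i true v) ∨ x = .t) →
    pathCost n C P = 0 ∧ ∀ q ∈ P.zip P.tail, isBridgeB n q.1 q.2 = false := by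
  intro P
  induction P with
  | nil => intro _ _; simp [pathCost]
  | cons a P' ih =>
    intro hc hh
    cases P' with
    | nil => simp [pathCost]
    | cons b rest =>
      obtain ⟨hab, hc'⟩ := List.isChain_cons_cons.mp hc
      rcases hh a rfl with ⟨i, v, rfl⟩ | rfl
      · -- a = mid i true v
        cases b with
        | s => exact absurd hab (by simp [GEdge])
        | t =>
          obtain ⟨h1, h2⟩ := ih hc' (by rintro x hx; simp at hx; right; exact hx.symm)
          refine ⟨by simp [pathCost_cons, h1, cost], ?_⟩
          rw [zip_tail_cons]
          rintro q hq
          rcases List.mem_cons.mp hq with rfl | hq'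
          · rfl
          · exact h2 q hq'
        | mid j sec w =>
          cases sec with
          | false => exact absurd hab (by simp [GEdge])
          | true =>
            obtain ⟨h1, h2⟩ := ih hc' (by rintro x hx; simp at hx; left; exact ⟨j, w, hx.symm⟩)
            refine ⟨by simp [pathCost_cons, h1, cost], ?_⟩
            rw [zip_tail_cons]
            rintro q hq
            rcases List.mem_cons.mp hq with rfl | hq'
            · rfl
            · exact h2 q hq'
      · exact absurd hab (by cases b <;> simp [GEdge])

lemma lemB (n : ℕ) (C : Finset (Fin n × Bool)) :
    ∀ P : List (Vtx n), P.Chain' (GEdge n) →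
    (∀ x, P.head? = some x → ∃ i v, x = .mid i false v) →
    P.getLast? = some .t →
    (∀ q ∈ P.zip P.tail, isBridgeB n q.1 q.2 = true →
        pathCost n C P = cost n C q.1 q.2) ∧
    (∃! q, q ∈ P.zip P.tail ∧ isBridgeB n q.1 q.2 = true) ∧
    pathCost n C P ≤ 1 := by
  intro P
  induction P with
  | nil => intro _ _ h; simp at h
  | cons a P' ih =>
    intro hc hh hl
    obtain ⟨i, v, rfl⟩ := hh a rfl
    cases P' with
    | nil => simp at hl
    | cons b rest =>
      obtain ⟨hab, hc'⟩ := List.isChain_cons_cons.mp hc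
      rw [List.getLast?_cons_cons] at hl
      cases b with
      | s => exact absurd hab (by simp [GEdge])
      | t => exact absurd hab (by simp [GEdge])
      | mid j sec w =>
        cases sec with
        | false =>
          -- non-bridge step, recurse
          obtain ⟨h1, h2, h3⟩ := ih hc' (by rintro x hx; simp at hx; exact ⟨j, w, hx.symm⟩) hl
          have hcost0 : cost n C (.mid i false v) (.mid j false w) = 0 := rfl
          have hbr : isBridgeB n (Vtx.mid i false v) (Vtx.mid j false w) = false := rfl
          refine ⟨?_, ?_, by simp [pathCost_cons, hcost0]; exact h3⟩
          · rw [zip_tail_cons]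
            rintro q hq hqb
            rcases List.mem_cons.mp hq with rfl | hq'
            · simp [hbr] at hqb
            · rw [pathCost_cons, hcost0, Nat.zero_add]; exact h1 q hq' hqb
          · obtain ⟨q0, ⟨hq0m, hq0b⟩, hq0u⟩ := h2
            refine ⟨q0, ⟨by rw [zip_tail_cons]; exact List.mem_cons_of_mem _ hq0m, hq0b⟩, ?_⟩
            rintro q ⟨hqm, hqb⟩
            rw [zip_tail_cons] at hqm
            rcases List.mem_cons.mp hqm with rfl | hq'
            · simp [hbr] at hqb
            · exact hq0u q ⟨hq', hqb⟩
        | true =>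
          -- bridge step
          obtain ⟨hji, hwv⟩ : j = i ∧ w = v := hab
          obtain ⟨h1, h2⟩ := lemA n C (Vtx.mid j true w :: rest) hc'
            (by rintro x hx; simp at hx; left; exact ⟨j, w, hx.symm⟩)
          have hbr : isBridgeB n (Vtx.mid i false v) (Vtx.mid j true w) = true := by
            simp [isBridgeB, hji, hwv]
          have hcle : cost n C (.mid i false v) (.mid j true w) ≤ 1 := by
            simp only [cost]; split <;> [skip; omega]; split <;> omega
          have hpc : pathCost n C (Vtx.mid i false v :: Vtx.mid j true w :: rest)
              = cost n C (.mid i false v) (.mid j true w) := by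
            rw [pathCost_cons, h1, Nat.add_zero]
          refine ⟨?_, ?_, by rw [hpc]; exact hcle⟩
          · rw [zip_tail_cons]
            rintro q hq hqb
            rcases List.mem_cons.mp hq with rfl | hq'
            · exact hpc
            · rw [h2 q hq'] at hqb; simp at hqb
          · refine ⟨(Vtx.mid i false v, Vtx.mid j true w),
              ⟨by rw [zip_tail_cons]; exact List.mem_cons_self, hbr⟩, ?_⟩
            rintro q ⟨hqm, hqb⟩
            rw [zip_tail_cons] at hqm
            rcases List.mem_cons.mp hqm with rfl | hq'
            · rfl
            · rw [h2 q hq'] at hqb; simp at hqb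

/-- For every directed `s`-`t` path `P` in `G_φ` and every clause index `j`, the total
cost of `P` under `c^j` equals `c^j` of the (unique, and existing) bridge edge of `P`;
in particular the cost of every `s`-`t` path under every scenario is either 0 or 1. -/
theorem stmt6 (n m : ℕ) (hn : 1 ≤ n) (hm : 1 ≤ m)
    (C : Fin m → Finset (Fin n × Bool)) (hC : ∀ j, (C j).card ≤ 3)
    (j : Fin m) (P : List (Vtx n)) (hP : isSTPath n P) :
    (∀ q ∈ P.zip P.tail, isBridgeB n q.1 q.2 = true →
        pathCost n (C j) P = cost n (C j) q.1 q.2) ∧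
    (∃! q, q ∈ P.zip P.tail ∧ isBridgeB n q.1 q.2 = true) ∧
    (pathCost n (C j) P = 0 ∨ pathCost n (C j) P = 1) := by
  obtain ⟨hc, _, hh, hl⟩ := hP
  cases P with
  | nil => simp at hh
  | cons a P' =>
    simp at hh; subst hh
    cases P' with
    | nil => simp at hl
    | cons b rest =>
      obtain ⟨hab, hc'⟩ := List.isChain_cons_cons.mp hc
      rw [List.getLast?_cons_cons] at hl
      cases b with
      | s => exact absurd hab (by simp [GEdge])
      | t => exact absurd hab (by simp [GEdge])
      | mid i sec v =>
        cases sec with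
        | true => exact absurd hab (by simp [GEdge])
        | false =>
          obtain ⟨h1, h2, h3⟩ := lemB n (C j) (Vtx.mid i false v :: rest) hc'
            (by rintro x hx; simp at hx; exact ⟨i, v, hx.symm⟩) hl
          have hcost0 : cost n (C j) Vtx.s (.mid i false v) = 0 := rfl
          have hbr : isBridgeB n Vtx.s (Vtx.mid i false v) = false := rfl
          have hpc : pathCost n (C j) (Vtx.s :: Vtx.mid i false v :: rest)
              = pathCost n (C j) (Vtx.mid i false v :: rest) := by
            rw [pathCost_cons, hcost0, Nat.zero_add]
          refine ⟨?_, ?_, by rw [hpc]; omega⟩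
          · rw [zip_tail_cons]
            rintro q hq hqb
            rcases List.mem_cons.mp hq with rfl | hq'
            · simp [hbr] at hqb
            · rw [hpc]; exact h1 q hq' hqb
          · obtain ⟨q0, ⟨hq0m, hq0b⟩, hq0u⟩ := h2
            refine ⟨q0, ⟨by rw [zip_tail_cons]; exact List.mem_cons_of_mem _ hq0m, hq0b⟩, ?_⟩
            rintro q ⟨hqm, hqb⟩
            rw [zip_tail_cons] at hqm
            rcases List.mem_cons.mp hqm with rfl | hq'
            · simp [hbr] at hqb
            · exact hq0u q ⟨hq', hqb⟩
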